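/- arXiv:1711.08594 — 3 statements merged into one kernel-verified Lean document; each statement's English description precedes it below -/
import Mathlib

section
/- Let M be strictly positive definite in ℝ^{d×d} and for each t let x_{t,1},…,x_{t,K_t} ∈ ℝ^d. Define M_t = M_{t-1} + Σ_{k=1}^{K_t} x_{t,k} x_{t,k}ᵀ with M_0 = M. Denote ‖x‖_{A}² = xᵀ A x. If Σ_{k=1}^{K_t} ‖x_{t,k}‖²_{M_{t-1}^{-1}} ≤ 1 for every t ≤ n, then Σ_{t=1}^n Σ_{k=1}^{K_t} ‖x_{t,k}‖²_{M_{t-1}^{-1}} ≤ 2 log(det(M_n)/det(M)). -/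
open Matrix Finset

private lemma one_add_sum_le_prod' {ι : Type*} (s : Finset ι) (f : ι → ℝ)
    (hf : ∀ i ∈ s, 0 ≤ f i) : 1 + ∑ i ∈ s, f i ≤ ∏ i ∈ s, (1 + f i) := by
  induction s using Finset.cons_induction with
  | empty => simp
  | cons a s ha ih =>
    rw [Finset.sum_cons, Finset.prod_cons]
    have h1 : 0 ≤ f a := hf a (Finset.mem_cons_self a s)
    have h2 : ∀ i ∈ s, 0 ≤ f i := fun i hi => hf i (Finset.mem_cons_of_mem hi)
    have hs : 0 ≤ ∑ i ∈ s, f i := Finset.sum_nonneg h2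
    calc 1 + (f a + ∑ i ∈ s, f i) ≤ (1 + f a) * (1 + ∑ i ∈ s, f i) := by nlinarith
    _ ≤ (1 + f a) * ∏ i ∈ s, (1 + f i) :=
        mul_le_mul_of_nonneg_left (ih h2) (by linarith)

private lemma trace_eq_sum_eigs {d : ℕ} {B : Matrix (Fin d) (Fin d) ℝ}
    (hB : B.IsHermitian) : B.trace = ∑ i, hB.eigenvalues i := by
  conv_lhs => rw [hB.spectral_theorem]
  rw [Unitary.conjStarAlgAut_apply, Matrix.trace_mul_cycle, ((Unitary.mem_iff.mp (hB.eigenvectorUnitary).2).1), one_mul,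
    Matrix.trace_diagonal]
  simp

private lemma eig_one_add_ge {d : ℕ} {A : Matrix (Fin d) (Fin d) ℝ} (hA : A.PosSemidef)
    (hB : (1 + A).IsHermitian) (i : Fin d) : 1 ≤ hB.eigenvalues i := by
  have h := hB.eigenvalues_eq i
  rw [add_mulVec, one_mulVec, dotProduct_add] at h
  simp only [RCLike.re_to_real] at h
  set v := hB.eigenvectorBasis i with hv
  have hAq : 0 ≤ star ((WithLp.equiv 2 (Fin d → ℝ)) v) ⬝ᵥ
      A *ᵥ (WithLp.equiv 2 (Fin d → ℝ)) v := hA.dotProduct_mulVec_nonneg _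
  have h1 : ‖v‖ = 1 := hB.eigenvectorBasis.orthonormal.1 i
  have hnorm : star ((WithLp.equiv 2 (Fin d → ℝ)) v) ⬝ᵥ
      (WithLp.equiv 2 (Fin d → ℝ)) v = (1 : ℝ) := by
    have h2 := EuclideanSpace.norm_eq v
    rw [h1] at h2
    have h3 : ∑ j, ‖v j‖ ^ 2 = 1 := by
      have hnn : 0 ≤ ∑ j, ‖v j‖ ^ 2 := by positivity
      nlinarith [Real.sq_sqrt hnn]
    simp only [Real.norm_eq_abs, sq, abs_mul_abs_self] at h3
    simpa [dotProduct] using h3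
  rw [h]
  change 1 ≤ star ((WithLp.equiv 2 (Fin d → ℝ)) v) ⬝ᵥ (WithLp.equiv 2 (Fin d → ℝ)) v +
    star ((WithLp.equiv 2 (Fin d → ℝ)) v) ⬝ᵥ A *ᵥ (WithLp.equiv 2 (Fin d → ℝ)) v
  rw [hnorm]
  linarith

private lemma det_one_add_ge' {d : ℕ} {A : Matrix (Fin d) (Fin d) ℝ} (hA : A.PosSemidef) :
    1 + A.trace ≤ (1 + A).det := by
  have hB : (1 + A).IsHermitian := Matrix.isHermitian_one.add hA.1
  have hev : ∀ i, 1 ≤ hB.eigenvalues i := eig_one_add_ge hA hB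
  have hdet : (1 + A).det = ∏ i, hB.eigenvalues i := by
    rw [hB.det_eq_prod_eigenvalues]; norm_num
  have htr : (1 + A).trace = ∑ i, hB.eigenvalues i := trace_eq_sum_eigs hB
  have htr' : (1 + A).trace = (d : ℝ) + A.trace := by
    rw [Matrix.trace_add, Matrix.trace_one]; simp
  have key := one_add_sum_le_prod' Finset.univ (fun i => hB.eigenvalues i - 1)
    (fun i _ => sub_nonneg.mpr (hev i))
  simp only [Finset.sum_sub_distrib, Finset.sum_const, Finset.card_univ, Fintype.card_fin,
    nsmul_eq_mul, mul_one] at key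
  have hprod : ∏ i, (1 + (hB.eigenvalues i - 1)) = ∏ i, hB.eigenvalues i := by
    apply Finset.prod_congr rfl; intro i _; ring
  rw [hprod] at key
  rw [hdet]
  have hsum : (d:ℝ) + A.trace = ∑ i, hB.eigenvalues i := by rw [← htr', htr]
  linarith [key]

open scoped MatrixOrder in
private lemma det_step' {d : ℕ} {M S : Matrix (Fin d) (Fin d) ℝ}
    (hM : M.PosDef) (hS : S.PosSemidef) :
    M.det * (1 + (S * M⁻¹).trace) ≤ (M + S).det := by
  set R := CFC.sqrt M with hRdef
  have hR : R.PosSemidef := (CFC.sqrt_nonneg M).posSemidef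
  have hRR : R * R = M := CFC.sqrt_mul_sqrt_self M hM.posSemidef.nonneg
  have hdR : R.det * R.det = M.det := by rw [← Matrix.det_mul, hRR]
  have hMdet : 0 < M.det := hM.det_pos
  have hRdet : IsUnit R.det := by
    apply isUnit_of_mul_isUnit_left (y := R.det)
    rw [hdR]; exact hMdet.ne'.isUnit
  have hRinv : (R⁻¹)ᴴ = R⁻¹ := (hR.1.inv).eq
  set A := R⁻¹ * S * R⁻¹ with hAdef
  have hA : A.PosSemidef := by
    have := hS.mul_mul_conjTranspose_same R⁻¹
    rwa [hRinv] at this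
  have hMS : M + S = R * (1 + A) * R := by
    have expand : R * (1 + A) * R = R * R + (R * R⁻¹) * S * (R⁻¹ * R) := by
      rw [hAdef]; noncomm_ring
    rw [expand, Matrix.mul_nonsing_inv _ hRdet, Matrix.nonsing_inv_mul _ hRdet,
      one_mul, mul_one, hRR]
  have hdet : (M + S).det = M.det * (1 + A).det := by
    rw [hMS, Matrix.det_mul, Matrix.det_mul, ← hdR]; ring
  have htrA : A.trace = (S * M⁻¹).trace := by
    rw [hAdef, Matrix.trace_mul_cycle, ← Matrix.mul_inv_rev, hRR, Matrix.trace_mul_comm]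
  have hkey : 1 + A.trace ≤ (1 + A).det := det_one_add_ge' hA
  rw [hdet, ← htrA]
  exact mul_le_mul_of_nonneg_left hkey hMdet.le

private lemma trace_vecMulVec_mul' {d : ℕ} (x : Fin d → ℝ) (B : Matrix (Fin d) (Fin d) ℝ) :
    (vecMulVec x x * B).trace = x ⬝ᵥ B *ᵥ x := by
  simp only [Matrix.trace, Matrix.diag, Matrix.mul_apply, vecMulVec_apply, dotProduct,
    mulVec, Finset.mul_sum]
  rw [Finset.sum_comm]
  apply Finset.sum_congr rfl; intro i _
  apply Finset.sum_congr rfl; intro j _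
  ring

private lemma posSemidef_vecMulVec' {d : ℕ} (x : Fin d → ℝ) :
    (vecMulVec x x).PosSemidef := by
  refine PosSemidef.of_dotProduct_mulVec_nonneg ?_ ?_
  · ext i j
    simp [Matrix.conjTranspose_apply, vecMulVec_apply, mul_comm]
  · intro y
    have h : star y ⬝ᵥ (vecMulVec x x) *ᵥ y = (x ⬝ᵥ y) * (x ⬝ᵥ y) := by
      simp only [star_trivial, dotProduct, mulVec, vecMulVec_apply, Finset.mul_sum,
        Finset.sum_mul]
      apply Finset.sum_congr rfl; intro i _
      apply Finset.sum_congr rfl; intro j _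
      ring
    rw [h]
    exact mul_self_nonneg _

theorem sum_selfNormalized_sq_le_two_log_det (d n : ℕ)
    (M0 : Matrix (Fin d) (Fin d) ℝ) (hM0 : M0.PosDef)
    (K : ℕ → ℕ) (x : (t : ℕ) → Fin (K t) → Fin d → ℝ)
    (M : ℕ → Matrix (Fin d) (Fin d) ℝ)
    (h0 : M 0 = M0)
    (hrec : ∀ t, M (t + 1) = M t + ∑ k, vecMulVec (x (t + 1) k) (x (t + 1) k))
    (hbound : ∀ t < n, ∑ k, x (t + 1) k ⬝ᵥ (M t)⁻¹ *ᵥ x (t + 1) k ≤ 1) :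
    ∑ t ∈ Finset.range n, ∑ k, x (t + 1) k ⬝ᵥ (M t)⁻¹ *ᵥ x (t + 1) k ≤
      2 * Real.log ((M n).det / M0.det) := by
  have hSps : ∀ t, (∑ k, vecMulVec (x (t + 1) k) (x (t + 1) k)).PosSemidef := by
    intro t
    exact Finset.sum_induction _ (fun N : Matrix (Fin d) (Fin d) ℝ => N.PosSemidef)
      (fun a b ha hb => ha.add hb) Matrix.PosSemidef.zero
      (fun k _ => posSemidef_vecMulVec' _)
  have hPD : ∀ t, (M t).PosDef := by
    intro t
    induction t with
    | zero => rwa [h0]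
    | succ t ih => rw [hrec t]; exact ih.add_posSemidef (hSps t)
  set u : ℕ → ℝ := fun t => ∑ k, x (t + 1) k ⬝ᵥ (M t)⁻¹ *ᵥ x (t + 1) k with hu
  have hu0 : ∀ t, 0 ≤ u t := by
    intro t
    apply Finset.sum_nonneg
    intro k _
    have := ((hPD t).inv.posSemidef).dotProduct_mulVec_nonneg (x (t + 1) k)
    simpa using this
  have hdetstep : ∀ t, (M t).det * (1 + u t) ≤ (M (t + 1)).det := by
    intro t
    have h := det_step' (hPD t) (hSps t)
    rw [← hrec t] at h
    have htr : ((∑ k, vecMulVec (x (t + 1) k) (x (t + 1) k)) * (M t)⁻¹).trace = u t := by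
      rw [Finset.sum_mul, Matrix.trace_sum]
      exact Finset.sum_congr rfl fun k _ => trace_vecMulVec_mul' _ _
    rwa [htr] at h
  have hlog : ∀ t, Real.log (1 + u t) ≤
      Real.log ((M (t + 1)).det) - Real.log ((M t).det) := by
    intro t
    have hd : 0 < (M t).det := (hPD t).det_pos
    have hd' : 0 < (M (t + 1)).det := (hPD (t + 1)).det_pos
    have h1u : 0 < 1 + u t := by linarith [hu0 t]
    have hdiv : 1 + u t ≤ (M (t + 1)).det / (M t).det := by
      rw [le_div_iff₀ hd]
      linarith [hdetstep t]
    calc Real.log (1 + u t) ≤ Real.log ((M (t + 1)).det / (M t).det) :=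
          Real.log_le_log h1u hdiv
      _ = Real.log ((M (t + 1)).det) - Real.log ((M t).det) :=
          Real.log_div hd'.ne' hd.ne'
  have hul : ∀ t < n, u t ≤ 2 * Real.log (1 + u t) := by
    intro t ht
    have h1 : u t ≤ 1 := hbound t ht
    have h0' : 0 ≤ u t := hu0 t
    have h1u : (0:ℝ) < 1 + u t := by linarith
    have hlog1 : u t / (1 + u t) ≤ Real.log (1 + u t) := by
      have h2 := Real.log_le_sub_one_of_pos (x := (1 + u t)⁻¹) (by positivity)
      rw [Real.log_inv] at h2
      have h3 : 1 - (1 + u t)⁻¹ = u t / (1 + u t) := by field_simp; ring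
      linarith
    have h4 : u t / 2 ≤ u t / (1 + u t) := by
      apply div_le_div_of_nonneg_left h0' h1u (by linarith)
    linarith
  calc ∑ t ∈ Finset.range n, u t
      ≤ ∑ t ∈ Finset.range n, 2 * Real.log (1 + u t) :=
        Finset.sum_le_sum fun t ht => hul t (Finset.mem_range.mp ht)
    _ ≤ ∑ t ∈ Finset.range n, 2 * (Real.log ((M (t + 1)).det) - Real.log ((M t).det)) := by
        apply Finset.sum_le_sum
        intro t _
        linarith [hlog t]
    _ = 2 * (Real.log ((M n).det) - Real.log ((M 0).det)) := by
        rw [← Finset.mul_sum, Finset.sum_range_sub (fun t => Real.log ((M t).det))]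
    _ = 2 * Real.log ((M n).det / M0.det) := by
        rw [h0, Real.log_div (hPD n).det_pos.ne' (h0 ▸ (hPD 0).det_pos).ne']
end

section
/- Let d ≥ 1, λ > 0, λ_x > 0, γ > 0, u ≥ 1, 0 < δ ≤ uγ²λ_xλ/128, and suppose λ ≤ d log(1 + T/(λd)) + 2 log(4u/δ). Then for all T ≥ (512d/(γ²λ_x)) log(4u/δ), we have (sqrt(d log(1 + T/(λd)) + 2 log(4u/δ)) + sqrt(λ)) / sqrt(λ + Tλ_x/8) ≤ γ/2. -/
lemma log_le_half_self {x : ℝ} (hx : 0 < x) : Real.log x ≤ x / 2 := by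
  have h1 : Real.log (Real.sqrt x) ≤ Real.sqrt x - 1 :=
    Real.log_le_sub_one_of_pos (Real.sqrt_pos.mpr hx)
  have h2 : Real.log (Real.sqrt x) = Real.log x / 2 := Real.log_sqrt hx.le
  nlinarith [Real.sq_sqrt hx.le, Real.sqrt_nonneg x, sq_nonneg (Real.sqrt x - 2)]

set_option maxHeartbeats 1600000 in
theorem confidence_radius_le_gamma_div_two (d : ℕ) (hd : 1 ≤ d)
    (lam lamx γ u δ : ℝ) (hlam : 0 < lam) (hlamx : 0 < lamx) (hγ : 0 < γ)
    (hu : 1 ≤ u) (hδ0 : 0 < δ) (hδ : δ ≤ u * γ ^ 2 * lamx * lam / 128) :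
    ∀ T : ℝ, 512 * d / (γ ^ 2 * lamx) * Real.log (4 * u / δ) ≤ T →
      lam ≤ d * Real.log (1 + T / (lam * d)) + 2 * Real.log (4 * u / δ) →
      (Real.sqrt (d * Real.log (1 + T / (lam * d)) + 2 * Real.log (4 * u / δ)) +
        Real.sqrt lam) / Real.sqrt (lam + T * lamx / 8) ≤ γ / 2 := by
  intro T hT hyp2
  have hd1 : (1:ℝ) ≤ (d:ℝ) := by exact_mod_cast hd
  have hd0 : (0:ℝ) < (d:ℝ) := by linarith
  have hu0 : (0:ℝ) < u := by linarith
  have hγ2 : (0:ℝ) < γ ^ 2 := by positivity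
  set s : ℝ := 4 * u / δ with hs_def
  set c : ℝ := lam * (d:ℝ) with hc_def
  set a : ℝ := 256 * (d:ℝ) / (γ ^ 2 * lamx) with ha_def
  set P : ℝ := γ ^ 2 * lamx * lam with hP_def
  clear_value s c a P
  have hs0 : 0 < s := by rw [hs_def]; positivity
  have hc0 : 0 < c := by rw [hc_def]; positivity
  have ha0 : 0 < a := by rw [ha_def]; positivity
  have hP0 : 0 < P := by rw [hP_def]; positivity
  have hkey : 512 / P ≤ s := by
    rw [hs_def, hP_def, div_le_div_iff₀ (by positivity) hδ0]
    nlinarith [hδ]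
  have h2a : 512 * (d:ℝ) / (γ ^ 2 * lamx) = 2 * a := by rw [ha_def]; ring
  rw [h2a] at hT
  have hac : 2 * a / c = 512 / P := by
    rw [ha_def, hc_def, hP_def]; field_simp; ring
  -- -log s ≤ log (P/512)
  have hMP : -Real.log s ≤ Real.log (P / 512) := by
    have h1 : (1:ℝ) ≤ s * (P / 512) := by
      have h512 : 512 ≤ s * P := (div_le_iff₀ hP0).mp hkey
      nlinarith
    have h2 : 0 ≤ Real.log (s * (P / 512)) := Real.log_nonneg h1
    rw [Real.log_mul (ne_of_gt hs0) (by positivity)] at h2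
    linarith
  have hlogP : Real.log (P / 512) ≤ P / 512 - 1 :=
    Real.log_le_sub_one_of_pos (by positivity)
  have hlogs_lb : 1 - P / 512 ≤ Real.log s := by linarith
  have h2aPc : 2 * a * (1 - P / 512) = 2 * a - c := by
    rw [ha_def, hc_def, hP_def]; field_simp; ring
  have harg : 0 < 1 + T / c := by
    have h0 : 2 * a * (1 - P / 512) ≤ 2 * a * Real.log s :=
      mul_le_mul_of_nonneg_left hlogs_lb (by linarith)
    have h3 : -c < T := by linarith
    have h4 : -1 < T / c := by rw [lt_div_iff₀ hc0]; linarith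
    linarith
  have hT0 : 0 ≤ T := by
    rcases le_or_gt 0 (Real.log s) with hls | hls
    · nlinarith [hT, mul_nonneg ha0.le hls]
    · by_contra hTn
      push_neg at hTn
      have h1 : 1 + T / c ≤ 1 := by
        have : T / c < 0 := div_neg_of_neg_of_pos hTn hc0
        linarith
      have h2 : Real.log (1 + T / c) ≤ 0 := Real.log_nonpos harg.le h1
      have h3 : (d:ℝ) * Real.log (1 + T / c) ≤ 0 :=
        mul_nonpos_of_nonneg_of_nonpos hd0.le h2
      linarith [hyp2]
  -- K1
  have hK1 : 2 * Real.log s ≤ γ ^ 2 * lamx * T / 256 := by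
    rcases le_or_gt 0 (Real.log s) with hls | hls
    · have h2 : (0:ℝ) < γ ^ 2 * lamx := by positivity
      have h3 := mul_le_mul_of_nonneg_left hT h2.le
      have haa : γ ^ 2 * lamx * a = 256 * (d:ℝ) := by
        rw [ha_def]; field_simp
      have heq : γ ^ 2 * lamx * (2 * a * Real.log s) = 512 * (d:ℝ) * Real.log s := by
        linear_combination (2 * Real.log s) * haa
      rw [heq] at h3
      have h4 : 512 * Real.log s ≤ 512 * ((d:ℝ) * Real.log s) := by
        nlinarith [mul_nonneg (sub_nonneg.mpr hd1) hls]
      rw [le_div_iff₀ (by norm_num : (0:ℝ) < 256)]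
      nlinarith
    · have : (0:ℝ) ≤ γ ^ 2 * lamx * T / 256 := by positivity
      linarith
  -- K2
  have hlog : Real.log (1 + T / c) ≤ T / a := by
    rcases le_or_gt a c with hca | hca
    · have h1 : Real.log (1 + T / c) ≤ T / c := by
        have := Real.log_le_sub_one_of_pos harg; linarith
      have h2 : T / c ≤ T / a := by gcongr
      linarith
    · have hsge : 2 * a / c ≤ s := by rw [hac]; exact hkey
      have hs2 : 2 < s := by
        refine lt_of_lt_of_le ?_ hsge
        rw [lt_div_iff₀ hc0]; linarith
      have hlog2 : (0.6931471803:ℝ) < Real.log 2 := Real.log_two_gt_d9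
      have hls2 : Real.log 2 < Real.log s := Real.log_lt_log (by norm_num) hs2
      have hls1 : (0.69:ℝ) < Real.log s := by linarith
      set t0 : ℝ := 2 * a * Real.log s with ht0_def
      have hat0 : a < t0 := by
        have := mul_pos ha0 (show (0:ℝ) < 2 * Real.log s - 1 by linarith)
        rw [ht0_def]; nlinarith
      have ht0T : t0 ≤ T := hT
      have ht0pos : 0 < t0 := lt_trans ha0 hat0
      have hTpos : 0 < T := lt_of_lt_of_le ht0pos ht0T
      have hTc1 : 1 ≤ T / c := by rw [le_div_iff₀ hc0]; linarith
      have hlog1 : Real.log (1 + T / c) ≤ Real.log (2 * T / c) := by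
        apply Real.log_le_log harg
        have h : 2 * T / c = T / c + T / c := by ring
        rw [h]; linarith
      have hsplit : Real.log (2 * T / c) = Real.log (2 * t0 / c) + Real.log (T / t0) := by
        rw [← Real.log_mul (by positivity) (by positivity)]
        congr 1
        field_simp
      have h2t0c : Real.log (2 * t0 / c) ≤ 2 * Real.log s := by
        have harg2 : 2 * t0 / c ≤ s ^ 2 := by
          have h1 : 2 * Real.log s ≤ s := by
            have := log_le_half_self hs0; linarith
          have h2 : (0:ℝ) ≤ 2 * Real.log s := by linarith
          have heq : 2 * t0 / c = (2 * a / c) * (2 * Real.log s) := by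
            rw [ht0_def]; ring
          rw [heq]
          calc (2 * a / c) * (2 * Real.log s) ≤ s * s :=
                mul_le_mul hsge h1 h2 hs0.le
            _ = s ^ 2 := by ring
        calc Real.log (2 * t0 / c) ≤ Real.log (s ^ 2) :=
              Real.log_le_log (by positivity) harg2
          _ = 2 * Real.log s := by
              rw [Real.log_pow]; push_cast; ring
      have hTt0 : Real.log (T / t0) ≤ (T - t0) / a := by
        have h1 : Real.log (T / t0) ≤ T / t0 - 1 := Real.log_le_sub_one_of_pos (by positivity)
        have h2 : T / t0 - 1 ≤ (T - t0) / a := by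
          have heq : T / t0 - 1 = (T - t0) / t0 := by field_simp
          rw [heq, div_le_div_iff₀ ht0pos ha0]
          exact mul_le_mul_of_nonneg_left hat0.le (sub_nonneg.mpr ht0T)
        linarith
      have hfin : 2 * Real.log s + (T - t0) / a = T / a := by
        rw [ht0_def]
        field_simp
        ring
      linarith [hlog1, hsplit, h2t0c, hTt0]
  have hK2 : (d:ℝ) * Real.log (1 + T / c) ≤ γ ^ 2 * lamx * T / 256 := by
    have h1 : (d:ℝ) * Real.log (1 + T / c) ≤ (d:ℝ) * (T / a) :=
      mul_le_mul_of_nonneg_left hlog hd0.le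
    have heq : (d:ℝ) * (T / a) = γ ^ 2 * lamx * T / 256 := by
      rw [ha_def]; field_simp
    linarith
  -- final assembly
  have hD0 : 0 < lam + T * lamx / 8 := by
    have := mul_nonneg hT0 hlamx.le
    linarith
  have hLbound : (d:ℝ) * Real.log (1 + T / c) + 2 * Real.log s ≤
      (γ / 4) ^ 2 * (lam + T * lamx / 8) := by
    nlinarith [hK1, hK2, mul_pos hγ2 hlam]

  have hsqL : Real.sqrt ((d:ℝ) * Real.log (1 + T / c) + 2 * Real.log s) ≤
      γ / 4 * Real.sqrt (lam + T * lamx / 8) := by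
    have h1 := Real.sqrt_le_sqrt hLbound
    rwa [Real.sqrt_mul (by positivity) _, Real.sqrt_sq (by positivity)] at h1
  have hsql : Real.sqrt lam ≤
      Real.sqrt ((d:ℝ) * Real.log (1 + T / c) + 2 * Real.log s) :=
    Real.sqrt_le_sqrt hyp2
  rw [div_le_iff₀ (Real.sqrt_pos.mpr hD0)]
  linarith [hsqL, hsql]
end

section
/- Let t ≥ 1 be an integer, d ≥ 1, λ_x ∈ (0,1], 0 < δ ≤ 1/8. If t ≥ (256/λ_x²) log(128d/(λ_x²δ)), then tλ_x/2 ≥ (1/3) sqrt(18 t A + A²) + A/3, where A = log((t+1)(t+3)d/δ). -/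
/-- `log x ≤ x / 2` for `x > 0`. -/
lemma log_le_half (x : ℝ) (hx : 0 < x) : Real.log x ≤ x / 2 := by
  have he : (0:ℝ) < Real.exp 1 := Real.exp_pos 1
  have h1 : Real.log (x / Real.exp 1) ≤ x / Real.exp 1 - 1 :=
    Real.log_le_sub_one_of_pos (by positivity)
  rw [Real.log_div (ne_of_gt hx) (ne_of_gt he), Real.log_exp] at h1
  have h2 : Real.log x ≤ x / Real.exp 1 := by linarith
  have h3 : x / Real.exp 1 ≤ x / 2 := by
    apply div_le_div_of_nonneg_left hx.le (by norm_num) ?_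
    have := Real.add_one_le_exp 1
    linarith
  linarith

set_option maxHeartbeats 1000000 in
theorem freedman_threshold_ineq (t d : ℕ) (ht : 1 ≤ t) (hd : 1 ≤ d)
    (lamx δ : ℝ) (hlamx0 : 0 < lamx) (hlamx1 : lamx ≤ 1)
    (hδ0 : 0 < δ) (hδ : δ ≤ 1 / 8)
    (hT : 256 / lamx ^ 2 * Real.log (128 * d / (lamx ^ 2 * δ)) ≤ t) :
    (1 / 3) * Real.sqrt (18 * t * Real.log ((t + 1) * (t + 3) * d / δ) +
        Real.log ((t + 1) * (t + 3) * d / δ) ^ 2) +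
      Real.log ((t + 1) * (t + 3) * d / δ) / 3 ≤ t * lamx / 2 := by
  set T : ℝ := (t : ℝ) with hTdef
  set D : ℝ := (d : ℝ) with hDdef
  have hT1 : (1:ℝ) ≤ T := by rw [hTdef]; exact_mod_cast ht
  have hD1 : (1:ℝ) ≤ D := by rw [hDdef]; exact_mod_cast hd
  have hT0 : (0:ℝ) < T := by linarith
  have hD0 : (0:ℝ) < D := by linarith
  have hl2 : (0:ℝ) < lamx ^ 2 := by positivity
  have hδne : δ ≠ 0 := ne_of_gt hδ0
  have hlne : lamx ≠ 0 := ne_of_gt hlamx0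
  -- Step 1: from hT, get log (128 * D / (lamx^2 * δ)) ≤ T * lamx^2 / 256
  have h1 : Real.log (128 * D / (lamx ^ 2 * δ)) ≤ T * lamx ^ 2 / 256 := by
    have := mul_le_mul_of_nonneg_left hT (le_of_lt (by positivity : (0:ℝ) < lamx ^ 2 / 256))
    calc Real.log (128 * D / (lamx ^ 2 * δ))
        = lamx ^ 2 / 256 * (256 / lamx ^ 2 * Real.log (128 * D / (lamx ^ 2 * δ))) := by
          field_simp
      _ ≤ lamx ^ 2 / 256 * T := this
      _ = T * lamx ^ 2 / 256 := by ring
  -- Step 2: log (T * D / δ) ≤ T * lamx^2 / 128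
  have h2 : Real.log (T * D / δ) ≤ T * lamx ^ 2 / 128 := by
    have hfac : T * D / δ = (128 * D / (lamx ^ 2 * δ)) * (T * lamx ^ 2 / 128) := by
      field_simp
    have hx1 : (0:ℝ) < 128 * D / (lamx ^ 2 * δ) := by positivity
    have hx2 : (0:ℝ) < T * lamx ^ 2 / 128 := by positivity
    rw [hfac, Real.log_mul (ne_of_gt hx1) (ne_of_gt hx2)]
    have h3 : Real.log (T * lamx ^ 2 / 128) ≤ T * lamx ^ 2 / 256 := by
      have := log_le_half (T * lamx ^ 2 / 128) hx2
      linarith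
    linarith
  -- Step 3: A ≤ T * lamx^2 / 64
  set A : ℝ := Real.log ((T + 1) * (T + 3) * D / δ) with hAdef
  have hDδ : (8:ℝ) ≤ D / δ := by
    rw [le_div_iff₀ hδ0]; nlinarith
  have hA : A ≤ T * lamx ^ 2 / 64 := by
    have hstep1 : A ≤ Real.log (8 * T * (T * D / δ)) := by
      apply Real.log_le_log (by positivity)
      have hq : (T + 1) * (T + 3) ≤ 8 * T ^ 2 := by nlinarith
      have : (T + 1) * (T + 3) * D / δ ≤ 8 * T ^ 2 * D / δ := by
        gcongr
      calc (T + 1) * (T + 3) * D / δ ≤ 8 * T ^ 2 * D / δ := this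
        _ = 8 * T * (T * D / δ) := by ring
    have hsplit : Real.log (8 * T * (T * D / δ)) =
        Real.log (8 * T) + Real.log (T * D / δ) := by
      rw [Real.log_mul (by positivity) (by positivity)]
    have h8T : Real.log (8 * T) ≤ Real.log (T * D / δ) := by
      apply Real.log_le_log (by positivity)
      calc 8 * T = T * 8 := by ring
        _ ≤ T * (D / δ) := by nlinarith
        _ = T * D / δ := by ring
    linarith
  have hA0 : 0 ≤ A := by
    apply Real.log_nonneg
    rw [le_div_iff₀ hδ0]
    have h8 : (8:ℝ) ≤ (T + 1) * (T + 3) := by nlinarith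
    nlinarith
  -- Step 4: final
  clear_value T D A
  clear hT h1 h2 hDδ hAdef hTdef hDdef
  have hsq : Real.sqrt (18 * T * A + A ^ 2) ≤ 9 / 16 * (T * lamx) + A := by
    have hy : (0:ℝ) ≤ 9 / 16 * (T * lamx) + A := by positivity
    rw [show (9 / 16 * (T * lamx) + A) = Real.sqrt ((9 / 16 * (T * lamx) + A) ^ 2) by
      rw [Real.sqrt_sq hy]]
    apply Real.sqrt_le_sqrt
    nlinarith [mul_le_mul_of_nonneg_left hA (by linarith : (0:ℝ) ≤ 18 * T),
      mul_nonneg (mul_nonneg hT0.le hlamx0.le) hA0]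
  have hA' : A ≤ T * lamx / 64 := by
    nlinarith [mul_le_mul_of_nonneg_left hlamx1 (mul_nonneg hT0.le hlamx0.le)]
  have hTl : 0 ≤ T * lamx := mul_nonneg hT0.le hlamx0.le
  linarith [hsq, hA', hTl]
end
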